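/- The number of tuples (b,c,d,e,f) ∈ F^5 with d ≠ 0 satisfying (bc+df)² − 4(b²+cf)(c²−bd) = 0 equals q³·(q−1). -/

import Mathlib

/-- The number of tuples `(b,c,d,e,f) ∈ F^5` with `d ≠ 0` satisfying
`(bc+df)² − 4(b²+cf)(c²−bd) = 0` equals `q³·(q−1)`. -/
theorem count_discriminant_d_ne_zero (F : Type*) [Field F] [Fintype F]
    (q : ℕ) (hq : Fintype.card F = q) (hchar : 3 < ringChar F) :
    {v : F × F × F × F × F | v.2.2.1 ≠ 0 ∧
        (v.1 * v.2.1 + v.2.2.1 * v.2.2.2.2) ^ 2 -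
          4 * (v.1 ^ 2 + v.2.1 * v.2.2.2.2) * (v.2.1 ^ 2 - v.1 * v.2.2.1) = 0}.ncard =
      q ^ 3 * (q - 1) := by
  classical
  have h2 : (2 : F) ≠ 0 := by
    intro h
    have := (CharP.cast_eq_zero_iff F (ringChar F) 2).mp (by exact_mod_cast h)
    have := Nat.le_of_dvd (by norm_num) this
    omega
  set S : Set (F × F × F × F × F) := {v : F × F × F × F × F | v.2.2.1 ≠ 0 ∧
        (v.1 * v.2.1 + v.2.2.1 * v.2.2.2.2) ^ 2 -
          4 * (v.1 ^ 2 + v.2.1 * v.2.2.2.2) * (v.2.1 ^ 2 - v.1 * v.2.2.1) = 0} with hSdef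
  let Φ : F × F × F × {d : F // d ≠ 0} → ↥S := fun w =>
    ⟨((w.2.1 ^ 2 - w.1 ^ 2) / w.2.2.2.1, w.2.1, w.2.2.2.1, w.2.2.1,
      (2 * w.1 ^ 3 + 3 * w.2.1 * w.1 ^ 2 - w.2.1 ^ 3) / w.2.2.2.1 ^ 2), by
      obtain ⟨t, c, e, d, hd⟩ := w
      refine ⟨hd, ?_⟩
      simp only
      field_simp
      ring⟩
  have hbij : Function.Bijective Φ := by
    constructor
    · rintro ⟨t, c, e, d, hd⟩ ⟨t', c', e', d', hd'⟩ h
      have h' := Subtype.ext_iff.mp h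
      simp only [Φ, Prod.mk.injEq] at h'
      obtain ⟨hb, hc, hdd, he, hf⟩ := h'
      subst hc hdd he
      have ht2 : t ^ 2 = t' ^ 2 := by
        field_simp at hb
        linear_combination -hb
      have ht3 : t ^ 3 = t' ^ 3 := by
        field_simp at hf
        have h23 : 2 * t ^ 3 = 2 * t' ^ 3 := by linear_combination hf - 3 * c * ht2
        exact mul_left_cancel₀ h2 h23
      have htt : t = t' := by
        by_cases h0 : t' = 0
        · subst h0
          simpa [pow_eq_zero_iff] using ht2
        · have ht'2 : t' ^ 2 ≠ 0 := pow_ne_zero _ h0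
          have hmm : t * t' ^ 2 = t' * t' ^ 2 := by
            calc t * t' ^ 2 = t * t ^ 2 := by rw [ht2]
            _ = t ^ 3 := by ring
            _ = t' ^ 3 := ht3
            _ = t' * t' ^ 2 := by ring
          exact mul_right_cancel₀ ht'2 hmm
      simp [htt]
    · rintro ⟨⟨b, c, d, e, f⟩, hd, heq⟩
      simp only [hSdef, Set.mem_setOf_eq] at heq hd
      have hu : (d ^ 2 * f + 3 * b * c * d - 2 * c ^ 3) ^ 2 = 4 * (c ^ 2 - b * d) ^ 3 := by
        linear_combination d ^ 2 * heq
      by_cases hs : c ^ 2 - b * d = 0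
      · have hu0 : d ^ 2 * f + 3 * b * c * d - 2 * c ^ 3 = 0 := by
          have hsq : (d ^ 2 * f + 3 * b * c * d - 2 * c ^ 3) ^ 2 = 0 := by rw [hu, hs]; ring
          exact pow_eq_zero_iff (by norm_num) |>.mp hsq
        refine ⟨(0, c, e, ⟨d, hd⟩), ?_⟩
        apply Subtype.ext
        show ((c ^ 2 - 0 ^ 2) / d, c, d, e, (2 * 0 ^ 3 + 3 * c * 0 ^ 2 - c ^ 3) / d ^ 2)
            = (b, c, d, e, f)
        rw [Prod.mk.injEq, Prod.mk.injEq, Prod.mk.injEq, Prod.mk.injEq]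
        refine ⟨?_, rfl, rfl, rfl, ?_⟩
        · field_simp
          linear_combination hs
        · field_simp
          linear_combination -hu0 - 3 * c * hs
      · set t : F := (d ^ 2 * f + 3 * b * c * d - 2 * c ^ 3) / (2 * (c ^ 2 - b * d)) with htdef
        have h2s : 2 * (c ^ 2 - b * d) ≠ 0 := mul_ne_zero h2 hs
        have ht2 : t ^ 2 = c ^ 2 - b * d := by
          rw [htdef]
          rw [div_pow, div_eq_iff (pow_ne_zero 2 h2s)]
          linear_combination hu
        have htu : t * (2 * (c ^ 2 - b * d)) = d ^ 2 * f + 3 * b * c * d - 2 * c ^ 3 :=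
          div_mul_cancel₀ _ h2s
        have ht3 : 2 * t ^ 3 + 3 * c * t ^ 2 - c ^ 3 = d ^ 2 * f := by
          linear_combination 2 * t * ht2 + htu + 3 * c * ht2
        refine ⟨(t, c, e, ⟨d, hd⟩), ?_⟩
        apply Subtype.ext
        show ((c ^ 2 - t ^ 2) / d, c, d, e, (2 * t ^ 3 + 3 * c * t ^ 2 - c ^ 3) / d ^ 2)
            = (b, c, d, e, f)
        rw [Prod.mk.injEq, Prod.mk.injEq, Prod.mk.injEq, Prod.mk.injEq]
        refine ⟨?_, rfl, rfl, rfl, ?_⟩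
        · rw [ht2]
          field_simp
          ring
        · rw [ht3]
          field_simp
  have hcard : Nat.card (F × F × F × {d : F // d ≠ 0}) = Nat.card S :=
    Nat.card_eq_of_bijective Φ hbij
  have hncard : S.ncard = Nat.card S := (Nat.card_coe_set_eq S).symm
  have hne : Fintype.card {d : F // d ≠ 0} = q - 1 := by
    rw [← hq, Fintype.card_eq.mpr ⟨(unitsEquivNeZero (G₀ := F)).symm⟩]
    rw [Fintype.card_units]
  rw [hncard, ← hcard]
  simp [Nat.card_eq_fintype_card, Fintype.card_prod, hne, hq]
  ring
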